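/- Define F : [0,1] × [0,1] → [0,1] on pairs (a,b) with a ≤ b and b − a < 1/3 by F(a,b) = (a+b)/2 − ((b−a)/2)·((1 − b − a)/(1 − b)) if a + b ≤ 1, and F(a,b) = (a+b)/2 + ((b−a)/2)·((b + a − 1)/a) if a + b > 1. Then F is continuous on its domain and satisfies: F(0,b) = 0, F(a,1) = 1, and a ≤ F(a,b) ≤ b for all such pairs. -/

import Mathlib

/-- The auxiliary function from the proof of almost positive transitivity. -/
noncomputable def Fhat (a b : ℝ) : ℝ :=
  if a + b ≤ 1 then (a + b) / 2 - ((b - a) / 2) * ((1 - b - a) / (1 - b))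
  else (a + b) / 2 + ((b - a) / 2) * ((b + a - 1) / a)

/-- The domain: pairs `(a,b)` in the unit square with `a ≤ b` and `b - a < 1/3`. -/
def FhatDomain : Set (ℝ × ℝ) :=
  {p | 0 ≤ p.1 ∧ p.2 ≤ 1 ∧ p.1 ≤ p.2 ∧ p.2 - p.1 < 1 / 3}

theorem stmt7 :
    ContinuousOn (fun p : ℝ × ℝ => Fhat p.1 p.2) FhatDomain ∧
    ∀ a b : ℝ, (a, b) ∈ FhatDomain →
      (a = 0 → Fhat a b = 0) ∧ (b = 1 → Fhat a b = 1) ∧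
      a ≤ Fhat a b ∧ Fhat a b ≤ b := by
  constructor
  · have heq : Set.EqOn
        (fun p : ℝ × ℝ => if p.1 + p.2 ≤ 1 then
          (p.1 + p.2) / 2 - ((p.2 - p.1) / 2) * ((1 - p.2 - p.1) / max (1 - p.2) (1/4))
        else (p.1 + p.2) / 2 + ((p.2 - p.1) / 2) * ((p.2 + p.1 - 1) / max p.1 (1/4)))
        (fun p : ℝ × ℝ => Fhat p.1 p.2) FhatDomain := by
      intro p hp
      obtain ⟨h0, h1, hab, hd⟩ := hp
      simp only [Fhat]
      split_ifs with h
      · rw [max_eq_left (by linarith : (1:ℝ)/4 ≤ 1 - p.2)]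
      · push_neg at h
        rw [max_eq_left (by linarith : (1:ℝ)/4 ≤ p.1)]
    refine ContinuousOn.congr (Continuous.continuousOn ?_) heq.symm
    apply continuous_if_le (by fun_prop) (by fun_prop)
    · apply Continuous.continuousOn
      apply Continuous.sub (by fun_prop)
      apply Continuous.mul (by fun_prop)
      apply Continuous.div (by fun_prop) (by fun_prop)
      intro x
      have : (0:ℝ) < max (1 - x.2) (1/4) := lt_of_lt_of_le (by norm_num) (le_max_right _ _)
      exact this.ne'
    · apply Continuous.continuousOn
      apply Continuous.add (by fun_prop)
      apply Continuous.mul (by fun_prop)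
      apply Continuous.div (by fun_prop) (by fun_prop)
      intro x
      have : (0:ℝ) < max x.1 (1/4) := lt_of_lt_of_le (by norm_num) (le_max_right _ _)
      exact this.ne'
    · intro x hx
      have h1 : 1 - x.2 - x.1 = 0 := by linarith
      have h2 : x.2 + x.1 - 1 = 0 := by linarith
      rw [h1, h2]
      simp
  · rintro a b ⟨h0, h1, hab, hd⟩
    refine ⟨?_, ?_, ?_, ?_⟩
    · rintro rfl
      have hb : b < 1/3 := by linarith
      rw [Fhat, if_pos (by linarith)]
      have : (1:ℝ) - b ≠ 0 := by linarith
      field_simp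
      ring
    · rintro rfl
      have ha : (2:ℝ)/3 ≤ a := by linarith
      rw [Fhat, if_neg (by linarith)]
      have : a ≠ 0 := by linarith
      field_simp
      ring
    · rw [Fhat]
      split_ifs with h
      · have hb : (0:ℝ) < 1 - b := by linarith
        have ht1 : (1 - b - a) / (1 - b) ≤ 1 := (div_le_one hb).mpr (by linarith)
        have hc : (0:ℝ) ≤ (b - a) / 2 := by linarith
        nlinarith [mul_le_mul_of_nonneg_left ht1 hc]
      · push_neg at h
        have ha : (0:ℝ) < a := by linarith
        have ht0 : 0 ≤ (b + a - 1) / a := div_nonneg (by linarith) ha.le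
        nlinarith [mul_nonneg (show (0:ℝ) ≤ (b - a)/2 by linarith) ht0]
    · rw [Fhat]
      split_ifs with h
      · have hb : (0:ℝ) < 1 - b := by linarith
        have ht0 : 0 ≤ (1 - b - a) / (1 - b) := div_nonneg (by linarith) hb.le
        nlinarith [mul_nonneg (show (0:ℝ) ≤ (b - a)/2 by linarith) ht0]
      · push_neg at h
        have ha : (0:ℝ) < a := by linarith
        have ht1 : (b + a - 1) / a ≤ 1 := (div_le_one ha).mpr (by linarith)
        have hc : (0:ℝ) ≤ (b - a) / 2 := by linarith
        nlinarith [mul_le_mul_of_nonneg_left ht1 hc]
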